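/- arXiv:1104.0696 — 2 statements merged into one kernel-verified Lean document; each statement's English description precedes it below -/
import Mathlib

section
/- In any associative unital ℂ-algebra A whose elements b_i^ξ, f_α^η satisfy the defining relations of the relative parabose set P_BF, the elements {b_i^+, b_j^-}, [f_α^+, f_β^-], {b_i^+, f_α^-}, {f_α^+, b_i^-} satisfy the commutation–anticommutation relations of the general linear Lie superalgebra gl(m/n): for all i,j,k,l ∈ I and α,β,γ,δ' ∈ J: [{b_i^+, b_j^-}, {b_k^+, b_l^-}] = 2δ_{jk}{b_i^+, b_l^-} − 2δ_{il}{b_k^+, b_j^-}; [{b_i^+, b_j^-}, [f_α^+, f_β^-]] = 0; [[f_α^+, f_β^-], [f_γ^+, f_{δ'}^-]] = 2δ_{βγ}[f_α^+, f_{δ'}^-] − 2δ_{α δ'}[f_γ^+, f_β^-]; {{f_α^+, b_i^-}, {f_β^+, b_j^-}} = 0; {{f_α^-, b_i^+}, {f_β^-, b_j^+}} = 0; {{f_α^+, b_i^-}, {f_β^-, b_j^+}} = 2δ_{ij}[f_α^+, f_β^-] + 2δ_{αβ}{b_j^+, b_i^-}; [{b_i^+, b_j^-}, {f_α^+, b_l^-}]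 = −2δ_{il}{f_α^+, b_j^-}; [{b_i^+, b_j^-}, {f_α^-, b_l^+}] = 2δ_{jl}{f_α^-, b_i^+}; [[f_α^+, f_β^-], {f_γ^+, b_l^-}] = 2δ_{βγ}{f_α^+, b_l^-}; [[f_α^+, f_β^-], {f_γ^-, b_l^+}] = −2δ_{αγ}{f_β^-, b_l^+}. -/
/-- The commutator `[x, y] = x*y - y*x`. -/
def pbComm {A : Type*} [Ring A] (x y : A) : A := x * y - y * x

/-- The anticommutator `{x, y} = x*y + y*x`. -/
def pbAComm {A : Type*} [Ring A] (x y : A) : A := x * y + y * x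

/-- Kronecker delta with values in `ℂ`. -/
def kd {I : Type*} [DecidableEq I] (i j : I) : ℂ := if i = j then 1 else 0

/-- A sign, i.e. `+1` or `-1`, regarded as an integer. -/
def IsSign (x : ℤ) : Prop := x = 1 ∨ x = -1

/-- The defining trilinear relations of the relative parabose set `P_BF`,
for a family `b` of parabosonic and `f` of parafermionic generators. -/
structure PBFRelations {A : Type*} [Ring A] [Algebra ℂ A]
    {I J : Type*} [DecidableEq I] [DecidableEq J]
    (b : I → ℤ → A) (f : J → ℤ → A) : Prop where
  rel_bbb : ∀ (i j k : I) (ξ η ε : ℤ), IsSign ξ → IsSign η → IsSign ε →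
    pbComm (pbAComm (b i ξ) (b j η)) (b k ε)
      = (((ε - η : ℤ) : ℂ) * kd j k) • b i ξ + (((ε - ξ : ℤ) : ℂ) * kd i k) • b j η
  rel_fff : ∀ (α β γ : J) (ξ η ε : ℤ), IsSign ξ → IsSign η → IsSign ε →
    pbComm (pbComm (f α ξ) (f β η)) (f γ ε)
      = ((((ε - η) ^ 2 : ℤ) : ℂ) / 2 * kd β γ) • f α ξ
        - ((((ε - ξ) ^ 2 : ℤ) : ℂ) / 2 * kd α γ) • f β η
  rel_bbf : ∀ (i j : I) (α : J) (ξ η ε : ℤ), IsSign ξ → IsSign η → IsSign ε →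
    pbComm (pbAComm (b i ξ) (b j η)) (f α ε) = 0
  rel_ffb : ∀ (α β : J) (i : I) (ξ η ε : ℤ), IsSign ξ → IsSign η → IsSign ε →
    pbComm (pbComm (f α ξ) (f β η)) (b i ε) = 0
  rel_fbb : ∀ (α : J) (i j : I) (ξ η ε : ℤ), IsSign ξ → IsSign η → IsSign ε →
    pbComm (pbAComm (f α ξ) (b i η)) (b j ε) = (((ε - η : ℤ) : ℂ) * kd i j) • f α ξ
  rel_bff : ∀ (i : I) (α β : J) (ξ η ε : ℤ), IsSign ξ → IsSign η → IsSign ε →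
    pbAComm (pbAComm (b i ξ) (f α η)) (f β ε) = ((((ε - η) ^ 2 : ℤ) : ℂ) / 2 * kd α β) • b i ξ

section Helpers
set_option linter.unusedSectionVars false
variable {A : Type*} [Ring A]

lemma pbAComm_comm (x y : A) : pbAComm x y = pbAComm y x := by
  noncomm_ring [pbAComm]

lemma comm_acomm (X u v : A) :
    pbComm X (pbAComm u v) = pbAComm (pbComm X u) v + pbAComm (pbComm X v) u := by
  simp only [pbComm, pbAComm]; noncomm_ring

lemma comm_comm' (X u v : A) :
    pbComm X (pbComm u v) = pbComm (pbComm X u) v + pbComm u (pbComm X v) := by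
  simp only [pbComm]; noncomm_ring

lemma acomm_acomm (X u v : A) :
    pbAComm X (pbAComm u v) = pbAComm (pbAComm X u) v + pbComm (pbComm X v) u := by
  simp only [pbComm, pbAComm]; noncomm_ring

lemma comm_add_left (x y z : A) : pbComm (x + y) z = pbComm x z + pbComm y z := by
  simp only [pbComm]; noncomm_ring

lemma comm_sub_left (x y z : A) : pbComm (x - y) z = pbComm x z - pbComm y z := by
  simp only [pbComm]; noncomm_ring

lemma comm_sub_right (x y z : A) : pbComm x (y - z) = pbComm x y - pbComm x z := by
  simp only [pbComm]; noncomm_ring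

lemma acomm_add_left (x y z : A) : pbAComm (x + y) z = pbAComm x z + pbAComm y z := by
  simp only [pbAComm]; noncomm_ring

lemma acomm_sub_left (x y z : A) : pbAComm (x - y) z = pbAComm x z - pbAComm y z := by
  simp only [pbAComm]; noncomm_ring

lemma comm_zero_left (y : A) : pbComm (0 : A) y = 0 := by simp [pbComm]
lemma comm_zero_right (y : A) : pbComm y (0 : A) = 0 := by simp [pbComm]
lemma acomm_zero_left (y : A) : pbAComm (0 : A) y = 0 := by simp [pbAComm]

variable [Algebra ℂ A]

lemma comm_smul_left (c : ℂ) (x y : A) : pbComm (c • x) y = c • pbComm x y := by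
  simp [pbComm, smul_mul_assoc, mul_smul_comm, smul_sub]

lemma comm_smul_right (c : ℂ) (x y : A) : pbComm x (c • y) = c • pbComm x y := by
  simp [pbComm, smul_mul_assoc, mul_smul_comm, smul_sub]

lemma acomm_smul_left (c : ℂ) (x y : A) : pbAComm (c • x) y = c • pbAComm x y := by
  simp [pbAComm, smul_mul_assoc, mul_smul_comm, smul_add]

end Helpers

/-- The bilinears `{b_i^+, b_j^-}`, `[f_α^+, f_β^-]`, `{b_i^+, f_α^-}`, `{f_α^+, b_i^-}`
satisfy the commutation-anticommutation relations of `gl(m/n)`. -/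
theorem gl_mn_relations {A : Type*} [Ring A] [Algebra ℂ A]
    {I J : Type*} [DecidableEq I] [DecidableEq J]
    (b : I → ℤ → A) (f : J → ℤ → A) (h : PBFRelations b f) :
    ∀ (i j k l : I) (α β γ δ' : J),
      (pbComm (pbAComm (b i 1) (b j (-1))) (pbAComm (b k 1) (b l (-1)))
        = (2 * kd j k) • pbAComm (b i 1) (b l (-1)) - (2 * kd i l) • pbAComm (b k 1) (b j (-1))) ∧
      (pbComm (pbAComm (b i 1) (b j (-1))) (pbComm (f α 1) (f β (-1))) = 0) ∧
      (pbComm (pbComm (f α 1) (f β (-1))) (pbComm (f γ 1) (f δ' (-1)))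
        = (2 * kd β γ) • pbComm (f α 1) (f δ' (-1)) - (2 * kd α δ') • pbComm (f γ 1) (f β (-1))) ∧
      (pbAComm (pbAComm (f α 1) (b i (-1))) (pbAComm (f β 1) (b j (-1))) = 0) ∧
      (pbAComm (pbAComm (f α (-1)) (b i 1)) (pbAComm (f β (-1)) (b j 1)) = 0) ∧
      (pbAComm (pbAComm (f α 1) (b i (-1))) (pbAComm (f β (-1)) (b j 1))
        = (2 * kd i j) • pbComm (f α 1) (f β (-1)) + (2 * kd α β) • pbAComm (b j 1) (b i (-1))) ∧
      (pbComm (pbAComm (b i 1) (b j (-1))) (pbAComm (f α 1) (b l (-1)))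
        = (-(2 * kd i l)) • pbAComm (f α 1) (b j (-1))) ∧
      (pbComm (pbAComm (b i 1) (b j (-1))) (pbAComm (f α (-1)) (b l 1))
        = (2 * kd j l) • pbAComm (f α (-1)) (b i 1)) ∧
      (pbComm (pbComm (f α 1) (f β (-1))) (pbAComm (f γ 1) (b l (-1)))
        = (2 * kd β γ) • pbAComm (f α 1) (b l (-1))) ∧
      (pbComm (pbComm (f α 1) (f β (-1))) (pbAComm (f γ (-1)) (b l 1))
        = (-(2 * kd α γ)) • pbAComm (f β (-1)) (b l 1)) := by
  intro i j k l α β γ δ'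
  have s1 : IsSign 1 := Or.inl rfl
  have sm : IsSign (-1) := Or.inr rfl
  refine ⟨?_, ?_, ?_, ?_, ?_, ?_, ?_, ?_, ?_, ?_⟩
  · -- [B_ij, B_kl]
    rw [comm_acomm, h.rel_bbb i j k 1 (-1) 1 s1 sm s1,
      h.rel_bbb i j l 1 (-1) (-1) s1 sm sm,
      acomm_add_left, acomm_add_left, acomm_smul_left, acomm_smul_left,
      acomm_smul_left, acomm_smul_left, pbAComm_comm (b j (-1)) (b k 1)]
    push_cast
    module
  · -- [B_ij, F_ab] = 0
    rw [comm_comm', h.rel_bbf i j α 1 (-1) 1 s1 sm s1,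
      h.rel_bbf i j β 1 (-1) (-1) s1 sm sm, comm_zero_left, comm_zero_right,
      add_zero]
  · -- [F_ab, F_cd]
    rw [comm_comm', h.rel_fff α β γ 1 (-1) 1 s1 sm s1,
      h.rel_fff α β δ' 1 (-1) (-1) s1 sm sm,
      comm_sub_left, comm_smul_left, comm_smul_left,
      comm_sub_right, comm_smul_right, comm_smul_right]
    push_cast
    module
  · -- {X+, Y+} = 0
    rw [acomm_acomm, h.rel_fbb α i j 1 (-1) (-1) s1 sm sm,
      pbAComm_comm (f α 1) (b i (-1)), h.rel_bff i α β (-1) 1 1 sm s1 s1,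
      acomm_smul_left, comm_smul_left]
    push_cast
    module
  · -- {X-, Y-} = 0
    rw [acomm_acomm, h.rel_fbb α i j (-1) 1 1 sm s1 s1,
      pbAComm_comm (f α (-1)) (b i 1), h.rel_bff i α β 1 (-1) (-1) s1 sm sm,
      acomm_smul_left, comm_smul_left]
    push_cast
    module
  · -- {X+, Y-}
    rw [acomm_acomm, h.rel_fbb α i j 1 (-1) 1 s1 sm s1,
      pbAComm_comm (f α 1) (b i (-1)), h.rel_bff i α β (-1) 1 (-1) sm s1 sm,
      acomm_smul_left, comm_smul_left, pbAComm_comm (b i (-1)) (b j 1)]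
    push_cast
    module
  · -- [B_ij, {f+, b-}]
    rw [comm_acomm, h.rel_bbf i j α 1 (-1) 1 s1 sm s1,
      h.rel_bbb i j l 1 (-1) (-1) s1 sm sm, acomm_zero_left,
      acomm_add_left, acomm_smul_left, acomm_smul_left,
      pbAComm_comm (b j (-1)) (f α 1)]
    push_cast
    module
  · -- [B_ij, {f-, b+}]
    rw [comm_acomm, h.rel_bbf i j α 1 (-1) (-1) s1 sm sm,
      h.rel_bbb i j l 1 (-1) 1 s1 sm s1, acomm_zero_left,
      acomm_add_left, acomm_smul_left, acomm_smul_left,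
      pbAComm_comm (b i 1) (f α (-1)), pbAComm_comm (b j (-1)) (f α (-1))]
    push_cast
    module
  · -- [F_ab, {f+, b-}]
    rw [comm_acomm, h.rel_fff α β γ 1 (-1) 1 s1 sm s1,
      h.rel_ffb α β l 1 (-1) (-1) s1 sm sm, acomm_zero_left,
      acomm_sub_left, acomm_smul_left, acomm_smul_left]
    push_cast
    module
  · -- [F_ab, {f-, b+}]
    rw [comm_acomm, h.rel_fff α β γ 1 (-1) (-1) s1 sm sm,
      h.rel_ffb α β l 1 (-1) 1 s1 sm s1, acomm_zero_left,
      acomm_sub_left, acomm_smul_left, acomm_smul_left]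
    push_cast
    module
end

section
/- The paraparticle realization map preserves the bracket of an even with an odd element: for all complex matrices A ∈ M_{m×m}(ℂ), D ∈ M_{n×n}(ℂ), B ∈ M_{m×n}(ℂ), C ∈ M_{n×m}(ℂ), one has [J₀(A,D), J₁(B,C)] = J₁(AB − BD, DC − CA) in the algebra 𝒜. -/
open scoped BigOperators

/-- The even part of the paraparticle realization map:
`J₀(A,D) = ½ Σ A_{kl} {b_k^+, b_l^-} + ½ Σ D_{αβ} [f_α^+, f_β^-]`. -/
noncomputable def J0 {𝒜 : Type*} [Ring 𝒜] [Algebra ℂ 𝒜] {m n : ℕ}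
    (b : Fin m → ℤ → 𝒜) (f : Fin n → ℤ → 𝒜)
    (A : Matrix (Fin m) (Fin m) ℂ) (D : Matrix (Fin n) (Fin n) ℂ) : 𝒜 :=
  (1 / 2 : ℂ) • (∑ k, ∑ l, A k l • pbAComm (b k 1) (b l (-1)))
    + (1 / 2 : ℂ) • (∑ α, ∑ β, D α β • pbComm (f α 1) (f β (-1)))

/-- The odd part of the paraparticle realization map:
`J₁(B,C) = ½ Σ ( B_{kα} {b_k^+, f_α^-} + C_{αk} {f_α^+, b_k^-} )`. -/
noncomputable def J1 {𝒜 : Type*} [Ring 𝒜] [Algebra ℂ 𝒜] {m n : ℕ}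
    (b : Fin m → ℤ → 𝒜) (f : Fin n → ℤ → 𝒜)
    (B : Matrix (Fin m) (Fin n) ℂ) (C : Matrix (Fin n) (Fin m) ℂ) : 𝒜 :=
  (1 / 2 : ℂ) • (∑ k, ∑ α, (B k α • pbAComm (b k 1) (f α (-1)) + C α k • pbAComm (f α 1) (b k (-1))))

section Aux
set_option linter.unusedSectionVars false

variable {𝒜 : Type*} [Ring 𝒜] [Algebra ℂ 𝒜]

lemma pbComm_add_left (x y z : 𝒜) : pbComm (x + y) z = pbComm x z + pbComm y z := by
  simp only [pbComm, add_mul, mul_add]; abel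

lemma pbComm_add_right (x y z : 𝒜) : pbComm x (y + z) = pbComm x y + pbComm x z := by
  simp only [pbComm, add_mul, mul_add]; abel

lemma pbComm_smul_left (c : ℂ) (x y : 𝒜) : pbComm (c • x) y = c • pbComm x y := by
  simp only [pbComm, smul_mul_assoc, mul_smul_comm, smul_sub]

lemma pbComm_smul_right (c : ℂ) (x y : 𝒜) : pbComm x (c • y) = c • pbComm x y := by
  simp only [pbComm, smul_mul_assoc, mul_smul_comm, smul_sub]

lemma pbComm_sum_left {ι : Type*} (s : Finset ι) (g : ι → 𝒜) (y : 𝒜) :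
    pbComm (∑ i ∈ s, g i) y = ∑ i ∈ s, pbComm (g i) y := by
  simp only [pbComm, Finset.sum_mul, Finset.mul_sum, Finset.sum_sub_distrib]

lemma pbComm_sum_right {ι : Type*} (s : Finset ι) (g : ι → 𝒜) (x : 𝒜) :
    pbComm x (∑ i ∈ s, g i) = ∑ i ∈ s, pbComm x (g i) := by
  simp only [pbComm, Finset.sum_mul, Finset.mul_sum, Finset.sum_sub_distrib]

lemma pbAComm_smul_left (c : ℂ) (x y : 𝒜) : pbAComm (c • x) y = c • pbAComm x y := by
  simp only [pbAComm, smul_mul_assoc, mul_smul_comm, smul_add]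

lemma pbAComm_smul_right (c : ℂ) (x y : 𝒜) : pbAComm x (c • y) = c • pbAComm x y := by
  simp only [pbAComm, smul_mul_assoc, mul_smul_comm, smul_add]

lemma pbAComm_add_left (x y z : 𝒜) : pbAComm (x + y) z = pbAComm x z + pbAComm y z := by
  simp only [pbAComm, add_mul, mul_add]; abel

lemma pbAComm_neg_right (x y : 𝒜) : pbAComm x (-y) = -pbAComm x y := by
  simp only [pbAComm, mul_neg, neg_mul, neg_add]

lemma pbAComm_neg_left (x y : 𝒜) : pbAComm (-x) y = -pbAComm x y := by
  simp only [pbAComm, mul_neg, neg_mul, neg_add]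

lemma pbAComm_zero_left (y : 𝒜) : pbAComm 0 y = 0 := by simp [pbAComm]

lemma pbAComm_zero_right (x : 𝒜) : pbAComm x 0 = 0 := by simp [pbAComm]

/-- Commutator against anticommutator expansion. -/
lemma pbComm_pbAComm (x u v : 𝒜) :
    pbComm x (pbAComm u v) = pbAComm (pbComm x u) v + pbAComm u (pbComm x v) := by
  simp only [pbComm, pbAComm]; noncomm_ring

set_option linter.unusedSectionVars false

variable {I J : Type*} [DecidableEq I] [DecidableEq J]
  {b : I → ℤ → 𝒜} {f : J → ℤ → 𝒜} (h : PBFRelations b f)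

include h in
lemma kd_symm (i j : I) : kd i j = kd j i := by simp [kd, eq_comm]

include h in
lemma L1 (k l i : I) (γ : J) :
    pbComm (pbAComm (b k 1) (b l (-1))) (pbAComm (b i 1) (f γ (-1)))
      = (2 * kd l i) • pbAComm (b k 1) (f γ (-1)) := by
  rw [pbComm_pbAComm]
  have h1 := h.rel_bbb k l i 1 (-1) 1 (Or.inl rfl) (Or.inr rfl) (Or.inl rfl)
  have h2 := h.rel_bbf k l γ 1 (-1) (-1) (Or.inl rfl) (Or.inr rfl) (Or.inr rfl)
  rw [h1, h2]
  norm_num [pbAComm_add_left, pbAComm_smul_left, pbAComm_zero_left, pbAComm_zero_right]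

include h in
lemma L2 (k l i : I) (γ : J) :
    pbComm (pbAComm (b k 1) (b l (-1))) (pbAComm (f γ 1) (b i (-1)))
      = (-2 * kd k i) • pbAComm (f γ 1) (b l (-1)) := by
  rw [pbComm_pbAComm]
  have h1 := h.rel_bbb k l i 1 (-1) (-1) (Or.inl rfl) (Or.inr rfl) (Or.inr rfl)
  have h2 := h.rel_bbf k l γ 1 (-1) 1 (Or.inl rfl) (Or.inr rfl) (Or.inl rfl)
  rw [h1, h2]
  norm_num [pbAComm_add_left, pbAComm_smul_left, pbAComm_smul_right, pbAComm_zero_left,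
    pbAComm_zero_right, pbAComm_neg_right, pbAComm_neg_left]

include h in
lemma L3 (α β γ : J) (i : I) :
    pbComm (pbComm (f α 1) (f β (-1))) (pbAComm (b i 1) (f γ (-1)))
      = (-2 * kd α γ) • pbAComm (b i 1) (f β (-1)) := by
  rw [pbComm_pbAComm]
  have h1 := h.rel_fff α β γ 1 (-1) (-1) (Or.inl rfl) (Or.inr rfl) (Or.inr rfl)
  have h2 := h.rel_ffb α β i 1 (-1) 1 (Or.inl rfl) (Or.inr rfl) (Or.inl rfl)
  rw [h1, h2]
  norm_num [pbAComm_smul_right, pbAComm_zero_left, pbAComm_zero_right, sub_eq_add_neg,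
    neg_smul, pbAComm_smul_left, pbAComm_neg_right, pbAComm_neg_left]

include h in
lemma L4 (α β γ : J) (i : I) :
    pbComm (pbComm (f α 1) (f β (-1))) (pbAComm (f γ 1) (b i (-1)))
      = (2 * kd β γ) • pbAComm (f α 1) (b i (-1)) := by
  rw [pbComm_pbAComm]
  have h1 := h.rel_fff α β γ 1 (-1) 1 (Or.inl rfl) (Or.inr rfl) (Or.inl rfl)
  have h2 := h.rel_ffb α β i 1 (-1) (-1) (Or.inl rfl) (Or.inr rfl) (Or.inr rfl)
  rw [h1, h2]
  norm_num [pbAComm_smul_right, pbAComm_zero_left, pbAComm_zero_right, sub_eq_add_neg,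
    neg_smul, pbAComm_smul_left, pbAComm_neg_right, pbAComm_neg_left]

lemma tri {α β γ : Type*} [Fintype α] [Fintype β] [Fintype γ] {M : Type*} [AddCommMonoid M]
    (F : α → β → γ → M) :
    (∑ a, ∑ b, ∑ c, F a b c) = ∑ c, ∑ b, ∑ a, F a b c := by
  rw [Finset.sum_comm]
  exact (Finset.sum_congr rfl fun _ _ => Finset.sum_comm).trans Finset.sum_comm

lemma tri2 {α β γ : Type*} [Fintype α] [Fintype β] [Fintype γ] {M : Type*} [AddCommMonoid M]
    (F : α → β → γ → M) :
    (∑ a, ∑ b, ∑ c, F a b c) = ∑ a, ∑ c, ∑ b, F a b c :=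
  Finset.sum_congr rfl fun _ _ => Finset.sum_comm

end Aux

/-- The paraparticle realization map preserves the bracket of an even with an odd element. -/
theorem J0_comm_J1 {𝒜 : Type*} [Ring 𝒜] [Algebra ℂ 𝒜] {m n : ℕ}
    (hm : 0 < m) (hn : 0 < n)
    (b : Fin m → ℤ → 𝒜) (f : Fin n → ℤ → 𝒜) (h : PBFRelations b f)
    (A : Matrix (Fin m) (Fin m) ℂ) (D : Matrix (Fin n) (Fin n) ℂ)
    (B : Matrix (Fin m) (Fin n) ℂ) (C : Matrix (Fin n) (Fin m) ℂ) :
    pbComm (J0 b f A D) (J1 b f B C) = J1 b f (A * B - B * D) (D * C - C * A) := by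
  unfold J0 J1
  simp only [pbComm_add_left, pbComm_smul_left, pbComm_smul_right, pbComm_sum_left,
    pbComm_sum_right, pbComm_add_right, L1 h, L2 h, L3 h, L4 h, smul_add, smul_smul,
    Finset.smul_sum]
  simp only [Finset.sum_add_distrib]
  have e1 : (∑ x : Fin m, ∑ x_1 : Fin n, ∑ x_2 : Fin m, ∑ x_3 : Fin m,
      (1 / 2 * B x x_1 * (1 / 2 * A x_2 x_3 * (2 * kd x_3 x))) • pbAComm (b x_2 1) (f x_1 (-1)))
      = ∑ x : Fin m, ∑ x_1 : Fin n, ∑ i : Fin m,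
        (1 / 2 * (A x i * B i x_1)) • pbAComm (b x 1) (f x_1 (-1)) := by
    simp only [kd, mul_ite, mul_one, mul_zero, ite_smul, zero_smul, Finset.sum_ite_eq',
      Finset.mem_univ, if_true]
    rw [tri]
    refine Finset.sum_congr rfl fun _ _ => Finset.sum_congr rfl fun _ _ =>
      Finset.sum_congr rfl fun _ _ => ?_
    congr 1; ring
  have e2 : (∑ x : Fin m, ∑ x_1 : Fin n, ∑ x_2 : Fin n, ∑ x_3 : Fin n,
      (1 / 2 * B x x_1 * (1 / 2 * D x_2 x_3 * (-2 * kd x_2 x_1))) • pbAComm (b x 1) (f x_3 (-1)))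
      = ∑ x : Fin m, ∑ x_1 : Fin n, ∑ i : Fin n,
        (-(1 / 2 * (B x i * D i x_1))) • pbAComm (b x 1) (f x_1 (-1)) := by
    rw [Finset.sum_congr rfl fun x _ => Finset.sum_congr rfl fun x_1 _ =>
      (Finset.sum_comm : _ = ∑ x_3 : Fin n, ∑ x_2 : Fin n, _)]
    simp only [kd, mul_ite, mul_one, mul_zero, ite_smul, zero_smul, Finset.sum_ite_eq',
      Finset.mem_univ, if_true]
    rw [tri2]
    refine Finset.sum_congr rfl fun _ _ => Finset.sum_congr rfl fun _ _ =>
      Finset.sum_congr rfl fun _ _ => ?_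
    congr 1; ring
  have e3 : (∑ x : Fin m, ∑ x_1 : Fin n, ∑ x_2 : Fin m, ∑ x_3 : Fin m,
      (1 / 2 * C x_1 x * (1 / 2 * A x_2 x_3 * (-2 * kd x_2 x))) • pbAComm (f x_1 1) (b x_3 (-1)))
      = ∑ x : Fin m, ∑ x_1 : Fin n, ∑ i : Fin m,
        (-(1 / 2 * (C x_1 i * A i x))) • pbAComm (f x_1 1) (b x (-1)) := by
    rw [Finset.sum_congr rfl fun x _ => Finset.sum_congr rfl fun x_1 _ =>
      (Finset.sum_comm : _ = ∑ x_3 : Fin m, ∑ x_2 : Fin m, _)]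
    simp only [kd, mul_ite, mul_one, mul_zero, ite_smul, zero_smul, Finset.sum_ite_eq',
      Finset.mem_univ, if_true]
    rw [tri]
    refine Finset.sum_congr rfl fun _ _ => Finset.sum_congr rfl fun _ _ =>
      Finset.sum_congr rfl fun _ _ => ?_
    congr 1; ring
  have e4 : (∑ x : Fin m, ∑ x_1 : Fin n, ∑ x_2 : Fin n, ∑ x_3 : Fin n,
      (1 / 2 * C x_1 x * (1 / 2 * D x_2 x_3 * (2 * kd x_3 x_1))) • pbAComm (f x_2 1) (b x (-1)))
      = ∑ x : Fin m, ∑ x_1 : Fin n, ∑ i : Fin n,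
        (1 / 2 * (D x_1 i * C i x)) • pbAComm (f x_1 1) (b x (-1)) := by
    simp only [kd, mul_ite, mul_one, mul_zero, ite_smul, zero_smul, Finset.sum_ite_eq',
      Finset.mem_univ, if_true]
    rw [tri2]
    refine Finset.sum_congr rfl fun _ _ => Finset.sum_congr rfl fun _ _ =>
      Finset.sum_congr rfl fun _ _ => ?_
    congr 1; ring
  rw [e1, e2, e3, e4]
  simp only [Matrix.sub_apply, Matrix.mul_apply, mul_sub, sub_smul,
    Finset.mul_sum, Finset.sum_smul, Finset.sum_sub_distrib]
  simp only [sub_eq_add_neg, ← Finset.sum_neg_distrib, ← neg_smul]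
  abel
end
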